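/- Let p ≥ 1 be an integer and let Q be an LDP-polygon such that (1,−1) and (p,1) are vertices of Q joined by an edge, (−1,0) is a vertex of Q, and every edge of Q other than conv({(1,−1),(p,1)}) has endpoints u, v satisfying |det(u,v)| = 1. Then the vertex set of Q satisfies {(1,−1),(p,1),(−1,0)} ⊆ V(Q) ⊆ {(1,−1),(p,1),(p−1,1),(−1,0),(0,−1)}; consequently Q is one of the four polygons Q_p^[1], Q_p^[2], Q̌_p^[2] := conv({(1,−1),(p,1),(−1,0),(0,−1)}), or Q_p^[3]. -/

import Mathlib

/-- An LDP-polygon: a convex polygon in ℝ² (convex hull of finitely many points) containing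
the origin in its interior, all of whose vertices are primitive lattice points. -/
def IsLDPpolygon (Q : Set (ℝ × ℝ)) : Prop :=
  (∃ F : Finset (ℝ × ℝ), Q = convexHull ℝ (F : Set (ℝ × ℝ))) ∧
  ((0, 0) : ℝ × ℝ) ∈ interior Q ∧
  ∀ z ∈ Set.extremePoints ℝ Q, ∃ a b : ℤ, z = ((a : ℝ), (b : ℝ)) ∧ Int.gcd a b = 1

/-- `u` and `v` are the endpoints of an edge (one-dimensional face) of the convex polygon `Q`. -/
def IsEdge (Q : Set (ℝ × ℝ)) (u v : ℝ × ℝ) : Prop :=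
  u ≠ v ∧ u ∈ Set.extremePoints ℝ Q ∧ v ∈ Set.extremePoints ℝ Q ∧
  segment ℝ u v ⊆ frontier Q

/-- Q_p^[1] := conv({(1,−1),(p,1),(−1,0)}). -/
def Qpoly1 (p : ℤ) : Set (ℝ × ℝ) :=
  convexHull ℝ ({(1, -1), ((p : ℝ), 1), (-1, 0)} : Set (ℝ × ℝ))

/-- Q_p^[2] := conv({(1,−1),(p,1),(p−1,1),(−1,0)}). -/
def Qpoly2 (p : ℤ) : Set (ℝ × ℝ) :=
  convexHull ℝ ({(1, -1), ((p : ℝ), 1), ((p : ℝ) - 1, 1), (-1, 0)} : Set (ℝ × ℝ))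

/-- Q̌_p^[2] := conv({(1,−1),(p,1),(−1,0),(0,−1)}). -/
def QpolyCheck2 (p : ℤ) : Set (ℝ × ℝ) :=
  convexHull ℝ ({(1, -1), ((p : ℝ), 1), (-1, 0), (0, -1)} : Set (ℝ × ℝ))

/-- Q_p^[3] := conv({(1,−1),(p,1),(p−1,1),(−1,0),(0,−1)}). -/
def Qpoly3 (p : ℤ) : Set (ℝ × ℝ) :=
  convexHull ℝ ({(1, -1), ((p : ℝ), 1), ((p : ℝ) - 1, 1), (-1, 0), (0, -1)} : Set (ℝ × ℝ))


noncomputable def detR (u v : ℝ × ℝ) : ℝ := u.1 * v.2 - u.2 * v.1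

lemma convex_hp (a b c : ℝ) : Convex ℝ {z : ℝ × ℝ | a * z.1 + b * z.2 ≤ c} := by
  intro x hx y hy s t hs ht hst
  simp only [Set.mem_setOf_eq, Prod.fst_add, Prod.snd_add, Prod.smul_fst, Prod.smul_snd,
    smul_eq_mul] at *
  have h1 := mul_le_mul_of_nonneg_left hx hs
  have h2 := mul_le_mul_of_nonneg_left hy ht
  have h3 : s * c + t * c = c := by rw [← add_mul, hst, one_mul]
  ring_nf at h1 h2 ⊢
  linarith [h1, h2, h3]

lemma not_interior_of_hp {s : Set (ℝ × ℝ)} {a b c : ℝ} (hab : ¬(a = 0 ∧ b = 0))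
    (hs : ∀ z ∈ s, a * z.1 + b * z.2 ≤ c) {x : ℝ × ℝ} (hx : a * x.1 + b * x.2 = c) :
    x ∉ interior s := by
  intro hxint
  have hc : Continuous fun t : ℝ => ((x.1 + t * a, x.2 + t * b) : ℝ × ℝ) := by continuity
  have hcont : Filter.Tendsto (fun t : ℝ => ((x.1 + t * a, x.2 + t * b) : ℝ × ℝ))
      (nhds 0) (nhds x) := by
    have h1 := hc.tendsto 0
    simpa using h1
  have hev : ∀ᶠ t : ℝ in nhds 0, (x.1 + t * a, x.2 + t * b) ∈ interior s :=
    hcont.eventually (isOpen_interior.mem_nhds hxint)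
  rw [Metric.eventually_nhds_iff] at hev
  obtain ⟨ε, hε, hball⟩ := hev
  have hdist : dist (ε/2) (0:ℝ) < ε := by
    rw [Real.dist_eq, sub_zero, abs_of_pos (by linarith)]; linarith
  have hmem : ((x.1 + (ε/2) * a, x.2 + (ε/2) * b) : ℝ × ℝ) ∈ s :=
    interior_subset (hball hdist)
  have h2 := hs _ hmem
  simp only at h2
  have hab2 : 0 < a ^ 2 + b ^ 2 := by
    rcases not_and_or.1 hab with h | h <;>
      [nlinarith [sq_nonneg b, abs_pos.2 h, sq_abs a]; nlinarith [sq_nonneg a, abs_pos.2 h, sq_abs b]]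
  nlinarith

lemma eq_smul_of_det_zero {w d : ℝ × ℝ} (hd : d ≠ 0) (h : w.1 * d.2 - w.2 * d.1 = 0) :
    ∃ t : ℝ, w = t • d := by
  rcases eq_or_ne d.1 0 with h1 | h1
  · have h2 : d.2 ≠ 0 := fun h2 => hd (Prod.ext h1 h2)
    have hw1 : w.1 = 0 := by
      have : w.1 * d.2 = 0 := by rw [h1] at h; linarith
      rcases mul_eq_zero.1 this with h' | h'
      · exact h'
      · exact absurd h' h2
    exact ⟨w.2 / d.2, Prod.ext (by simp [hw1, h1]) (by simp [div_mul_cancel₀, h2])⟩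
  · refine ⟨w.1 / d.1, Prod.ext (by simp [div_mul_cancel₀, h1]) ?_⟩
    simp only [Prod.smul_snd, smul_eq_mul]
    field_simp
    nlinarith [h]

lemma detR_sub_left (x y w : ℝ × ℝ) : detR (x - y) w = detR x w - detR y w := by
  unfold detR; simp only [Prod.fst_sub, Prod.snd_sub]; ring

lemma detR_smul_left (c : ℝ) (x w : ℝ × ℝ) : detR (c • x) w = c * detR x w := by
  unfold detR; simp only [Prod.smul_fst, Prod.smul_snd, smul_eq_mul]; ring

lemma hp_of_edge {Q : Set (ℝ × ℝ)} (hconv : Convex ℝ Q)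
    (h0 : ((0,0) : ℝ × ℝ) ∈ interior Q) {u v : ℝ × ℝ}
    (hu : u ∈ Q) (hv : v ∈ Q)
    (hseg : segment ℝ u v ⊆ frontier Q) (hD : 0 < detR u v) :
    ∀ q ∈ Q, detR q (v - u) ≤ detR u v := by
  have hfr : ∀ w ∈ segment ℝ u v, w ∉ interior Q := fun w hw hwint =>
    Set.disjoint_left.mp disjoint_interior_frontier hwint (hseg hw)
  have hlu : detR u (v - u) = detR u v := by
    unfold detR; simp only [Prod.fst_sub, Prod.snd_sub]; ring
  have hvu : v - u ≠ 0 := by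
    intro h
    rw [sub_eq_zero.1 h] at hD; unfold detR at hD; linarith
  have key : ∀ y : ℝ × ℝ, y ∈ interior Q → detR y (v - u) = detR u v → False := by
    intro y hy hly
    have hdet0 : (y - u).1 * (v - u).2 - (y - u).2 * (v - u).1 = 0 := by
      have h5 := detR_sub_left y u (v - u)
      unfold detR at h5 hly hlu
      rw [h5, hly, hlu]; ring
    obtain ⟨t, ht⟩ := eq_smul_of_det_zero hvu hdet0
    have hyrep : y = (1 - t) • u + t • v := by
      have h2 : y = u + t • (v - u) := by rw [← ht]; abel
      rw [h2]; module
    rcases le_or_gt t 0 with ht0 | ht0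
    · rcases eq_or_lt_of_le ht0 with ht0' | ht0'
      · -- t = 0
        apply hfr u (left_mem_segment ℝ u v)
        have h3 : y = u := by rw [hyrep, ht0']; simp
        rwa [h3] at hy
      · -- t < 0 : u ∈ interior
        have h1t : (0:ℝ) < 1 - t := by linarith
        have hcoef : (1 / (1 - t)) + (-t / (1 - t)) = 1 := by
          rw [← add_div]
          have : (1:ℝ) + -t = 1 - t := by ring
          rw [this]; exact div_self (by linarith)
        have hrep : (1 / (1 - t)) • y + (-t / (1 - t)) • v = u := by
          rw [hyrep]
          match_scalars <;> field_simp <;> ring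
        have huint := hconv.combo_interior_self_mem_interior hy hv
          (div_pos one_pos h1t) (le_of_lt (div_pos (by linarith) h1t)) hcoef
        rw [hrep] at huint
        exact hfr u (left_mem_segment ℝ u v) huint
    · rcases le_or_gt t 1 with ht1 | ht1
      · exact hfr y ⟨1 - t, t, by linarith, le_of_lt ht0, by ring, hyrep.symm⟩ hy
      · have htpos : (0:ℝ) < t := by linarith
        have hcoef : (1 / t) + (1 - 1 / t) = 1 := by ring
        have hrep : (1 / t) • y + (1 - 1 / t) • u = v := by
          rw [hyrep]
          match_scalars <;> field_simp <;> ring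
        have hb : (0:ℝ) ≤ 1 - 1 / t := by
          rw [sub_nonneg, div_le_one htpos]; linarith
        have hvint := hconv.combo_interior_self_mem_interior hy hu
          (div_pos one_pos htpos) hb hcoef
        rw [hrep] at hvint
        exact hfr v (right_mem_segment ℝ u v) hvint
  intro q hq
  by_contra hgt
  push_neg at hgt
  have hlqpos : 0 < detR q (v - u) := lt_trans hD hgt
  set lam := detR u v / detR q (v - u) with hlam
  have hlam0 : 0 < lam := div_pos hD hlqpos
  have hlam1 : lam < 1 := by rw [hlam, div_lt_one hlqpos]; exact hgt
  have hy : lam • q ∈ interior Q := by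
    have h4 := hconv.combo_interior_self_mem_interior h0 hq
      (a := 1 - lam) (b := lam) (by linarith) (le_of_lt hlam0) (by ring)
    simpa [show ((0,0):ℝ×ℝ) = 0 from rfl] using h4
  exact key (lam • q) hy (by rw [detR_smul_left, hlam]; field_simp)

lemma exists_next (ε : ℝ) (hε : ε = 1 ∨ ε = -1)
    (V : Set (ℝ × ℝ)) (hVfin : V.Finite) (Q : Set (ℝ × ℝ))
    (hQV : Q = convexHull ℝ V) (h0 : ((0,0) : ℝ × ℝ) ∈ interior Q)
    (hVext : ∀ v ∈ V, v ∈ Set.extremePoints ℝ Q)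
    (hV0 : ∀ v ∈ V, v ≠ 0)
    (u : ℝ × ℝ) (hu : u ∈ V) :
    ∃ w ∈ V, 0 < ε * detR u w ∧
      (∀ z ∈ V, 0 < ε * detR u z → 0 ≤ ε * detR w z) ∧
      (∀ z ∈ V, ε * (detR z w + detR u z) ≤ ε * detR u w) ∧
      IsEdge Q u w := by
  have hε2 : ε ≠ 0 := by rcases hε with h | h <;> rw [h] <;> norm_num
  have hconv : Convex ℝ Q := by rw [hQV]; exact convex_convexHull ℝ V
  have hVQ : V ⊆ Q := by rw [hQV]; exact subset_convexHull ℝ V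
  have h0Q : ((0,0) : ℝ × ℝ) ∈ Q := interior_subset h0
  have hune : u ≠ 0 := hV0 u hu
  set S := {z ∈ V | 0 < ε * detR u z} with hSdef
  have hSne : S.Nonempty := by
    by_contra hS
    push_neg at hS
    have hsub : Q ⊆ {z : ℝ × ℝ | (-ε * u.2) * z.1 + (ε * u.1) * z.2 ≤ 0} := by
      rw [hQV]
      apply convexHull_min _ (convex_hp _ _ _)
      intro z hz
      have hn : ¬ (0 < ε * detR u z) := by
        intro hpos
        have : z ∈ S := ⟨hz, hpos⟩
        rw [hS] at this; exact this
      push_neg at hn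
      unfold detR at hn
      simp only [Set.mem_setOf_eq]
      nlinarith
    have hco : ¬((-ε * u.2) = 0 ∧ (ε * u.1) = 0) := by
      rintro ⟨h1, h2⟩
      apply hune
      have hu2 : u.2 = 0 := by
        rcases mul_eq_zero.1 h1 with h | h
        · exact absurd (neg_eq_zero.1 h) hε2
        · exact h
      have hu1 : u.1 = 0 := by
        rcases mul_eq_zero.1 h2 with h | h
        · exact absurd h hε2
        · exact h
      exact Prod.ext hu1 hu2
    exact not_interior_of_hp hco (fun z hz => hsub hz) (by norm_num) h0
  have hSfin : S.Finite := hVfin.subset (fun z hz => hz.1)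
  obtain ⟨w, hwS, hwmax⟩ := Set.exists_max_image S
    (fun z => (z.1 * u.1 + z.2 * u.2) / (ε * detR u z)) hSfin hSne
  obtain ⟨hwV, hwpos⟩ := hwS
  have husq : 0 < u.1 ^ 2 + u.2 ^ 2 := by
    by_contra hle
    push_neg at hle
    have h1 : u.1 = 0 := by nlinarith [sq_nonneg u.1, sq_nonneg u.2]
    have h2 : u.2 = 0 := by nlinarith [sq_nonneg u.1, sq_nonneg u.2]
    exact hune (Prod.ext h1 h2)
  have hmin : ∀ z ∈ V, 0 < ε * detR u z → 0 ≤ ε * detR w z := by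
    intro z hz hzpos
    have hfz := hwmax z ⟨hz, hzpos⟩
    have hid : (w.1 * u.1 + w.2 * u.2) * (ε * detR u z) - (z.1 * u.1 + z.2 * u.2) * (ε * detR u w)
        = (u.1 ^ 2 + u.2 ^ 2) * (ε * detR w z) := by
      unfold detR; ring
    have e1 : ((w.1 * u.1 + w.2 * u.2) / (ε * detR u w)) * (ε * detR u w) = w.1 * u.1 + w.2 * u.2 :=
      div_mul_cancel₀ _ (ne_of_gt hwpos)
    have e2 : ((z.1 * u.1 + z.2 * u.2) / (ε * detR u z)) * (ε * detR u z) = z.1 * u.1 + z.2 * u.2 :=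
      div_mul_cancel₀ _ (ne_of_gt hzpos)
    have hprod : 0 ≤ ((w.1 * u.1 + w.2 * u.2) / (ε * detR u w)
        - (z.1 * u.1 + z.2 * u.2) / (ε * detR u z)) * ((ε * detR u w) * (ε * detR u z)) :=
      mul_nonneg (by simpa using sub_nonneg.2 hfz) (le_of_lt (mul_pos hwpos hzpos))
    have hexp : ((w.1 * u.1 + w.2 * u.2) / (ε * detR u w)
        - (z.1 * u.1 + z.2 * u.2) / (ε * detR u z)) * ((ε * detR u w) * (ε * detR u z))
        = (u.1 ^ 2 + u.2 ^ 2) * (ε * detR w z) := by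
      rw [sub_mul]
      rw [show ((w.1 * u.1 + w.2 * u.2) / (ε * detR u w)) * ((ε * detR u w) * (ε * detR u z))
          = (((w.1 * u.1 + w.2 * u.2) / (ε * detR u w)) * (ε * detR u w)) * (ε * detR u z) by ring]
      rw [show ((z.1 * u.1 + z.2 * u.2) / (ε * detR u z)) * ((ε * detR u w) * (ε * detR u z))
          = (((z.1 * u.1 + z.2 * u.2) / (ε * detR u z)) * (ε * detR u z)) * (ε * detR u w) by ring]
      rw [e1, e2, hid]
    rw [hexp] at hprod
    nlinarith
  have hhp : ∀ z ∈ V, ε * (detR z w + detR u z) ≤ ε * detR u w := by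
    intro z hz
    by_contra hgt
    push_neg at hgt
    set α := ε * detR u z with hα
    set β := ε * detR z w with hβ
    set D := ε * detR u w with hD
    have hab : D < α + β := by
      have he : ε * (detR z w + detR u z) = α + β := by rw [hα, hβ]; ring
      linarith [hgt, he.symm.le, he.le]
    have hid1 : D * z.1 = α * w.1 + β * u.1 := by
      rw [hα, hβ, hD]; unfold detR
      rcases hε with h | h <;> rw [h] <;> ring
    have hid2 : D * z.2 = α * w.2 + β * u.2 := by
      rw [hα, hβ, hD]; unfold detR
      rcases hε with h | h <;> rw [h] <;> ring
    rcases lt_or_ge 0 α with hα0 | hα0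
    · -- z ∈ S, so β ≤ 0, contradiction with w extreme
      have hβ0 : β ≤ 0 := by
        have hm := hmin z hz hα0
        have hwz : ε * detR w z = - β := by rw [hβ]; unfold detR; ring
        rw [hwz] at hm; linarith
      have hc1pos : 0 < D / α := div_pos hwpos hα0
      have hc1lt : D / α < 1 := by rw [div_lt_one hα0]; linarith
      set c2 := -β / α with hc2
      have hc2nn : 0 ≤ c2 := div_nonneg (by linarith) (le_of_lt hα0)
      have hsum : c2 + D / α ≤ 1 := by
        rw [hc2, ← add_div, div_le_one hα0]; linarith
      set tt := c2 / (1 - D / α) with htt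
      have htt0 : 0 ≤ tt := div_nonneg hc2nn (by linarith)
      have htt1 : tt ≤ 1 := by
        rw [htt, div_le_one (by linarith)]; linarith
      set x2 := tt • u with hx2
      have hx2Q : x2 ∈ Q := by
        have hrep0 : x2 = tt • u + (1 - tt) • ((0,0) : ℝ × ℝ) := by
          rw [hx2]; simp
        rw [hrep0]
        exact hconv (hVQ hu) h0Q htt0 (by linarith) (by ring)
      have hcc : (1 - D / α) * tt = c2 := by
        rw [htt, mul_comm]; exact div_mul_cancel₀ _ (by linarith)
      have hαne : α ≠ 0 := ne_of_gt hα0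
      have hwrep : (D / α) • z + (1 - D / α) • x2 = w := by
        rw [hx2]
        apply Prod.ext
        · simp only [Prod.fst_add, Prod.smul_fst, smul_eq_mul]
          rw [← mul_assoc, hcc, hc2, div_mul_eq_mul_div, div_mul_eq_mul_div,
            ← add_div, div_eq_iff hαne]
          linear_combination hid1
        · simp only [Prod.snd_add, Prod.smul_snd, smul_eq_mul]
          rw [← mul_assoc, hcc, hc2, div_mul_eq_mul_div, div_mul_eq_mul_div,
            ← add_div, div_eq_iff hαne]
          linear_combination hid2
      have hwopen : w ∈ openSegment ℝ z x2 :=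
        ⟨D / α, 1 - D / α, hc1pos, by linarith, by ring, hwrep⟩
      have hext := hVext w hwV
      rw [mem_extremePoints] at hext
      have hzw : z = w := (hext.2 z (hVQ hz) x2 hx2Q hwopen).1
      have hαD : α = D := by rw [hα, hD, hzw]
      have hβ00 : β = 0 := by rw [hβ, hzw]; unfold detR; ring
      rw [hαD, hβ00] at hab; linarith
    · -- α ≤ 0 : contradiction with u extreme
      have hβD : D < β := by linarith
      have hc1pos : 0 < D / β := div_pos hwpos (by linarith)
      have hc1lt : D / β < 1 := by rw [div_lt_one (by linarith)]; linarith
      set c2 := -α / β with hc2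
      have hc2nn : 0 ≤ c2 := div_nonneg (by linarith) (by linarith)
      have hsum : c2 + D / β ≤ 1 := by
        rw [hc2, ← add_div, div_le_one (by linarith)]; linarith
      set tt := c2 / (1 - D / β) with htt
      have htt0 : 0 ≤ tt := div_nonneg hc2nn (by linarith)
      have htt1 : tt ≤ 1 := by
        rw [htt, div_le_one (by linarith)]; linarith
      set x2 := tt • w with hx2
      have hx2Q : x2 ∈ Q := by
        have hrep0 : x2 = tt • w + (1 - tt) • ((0,0) : ℝ × ℝ) := by
          rw [hx2]; simp
        rw [hrep0]
        exact hconv (hVQ hwV) h0Q htt0 (by linarith) (by ring)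
      have hcc : (1 - D / β) * tt = c2 := by
        rw [htt, mul_comm]; exact div_mul_cancel₀ _ (by linarith)
      have hβne : β ≠ 0 := by intro h; rw [h] at hβD; linarith
      have hurep : (D / β) • z + (1 - D / β) • x2 = u := by
        rw [hx2]
        apply Prod.ext
        · simp only [Prod.fst_add, Prod.smul_fst, smul_eq_mul]
          rw [← mul_assoc, hcc, hc2, div_mul_eq_mul_div, div_mul_eq_mul_div,
            ← add_div, div_eq_iff hβne]
          linear_combination hid1
        · simp only [Prod.snd_add, Prod.smul_snd, smul_eq_mul]
          rw [← mul_assoc, hcc, hc2, div_mul_eq_mul_div, div_mul_eq_mul_div,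
            ← add_div, div_eq_iff hβne]
          linear_combination hid2
      have huopen : u ∈ openSegment ℝ z x2 :=
        ⟨D / β, 1 - D / β, hc1pos, by linarith, by ring, hurep⟩
      have hext := hVext u hu
      rw [mem_extremePoints] at hext
      have hzu : z = u := (hext.2 z (hVQ hz) x2 hx2Q huopen).1
      have hα00 : α = 0 := by rw [hα, hzu]; unfold detR; ring
      have hβDD : β = D := by rw [hβ, hD, hzu]
      rw [hα00, hβDD] at hab; linarith
  have hunw : u ≠ w := by
    intro h; rw [h] at hwpos; unfold detR at hwpos
    nlinarith [hwpos]
  refine ⟨w, hwV, hwpos, hmin, hhp, hunw, hVext u hu, hVext w hwV, ?_⟩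
  -- segment ⊆ frontier
  intro x hx
  have hxQ : x ∈ Q := hconv.segment_subset (hVQ hu) (hVQ hwV) hx
  have hQsub : ∀ q ∈ Q, (ε * (w.2 - u.2)) * q.1 + (ε * (u.1 - w.1)) * q.2 ≤ ε * detR u w := by
    intro q hq
    rw [hQV] at hq
    have hsub : convexHull ℝ V ⊆
        {z : ℝ × ℝ | (ε * (w.2 - u.2)) * z.1 + (ε * (u.1 - w.1)) * z.2 ≤ ε * detR u w} := by
      apply convexHull_min _ (convex_hp _ _ _)
      intro z hz
      have := hhp z hz
      simp only [Set.mem_setOf_eq]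
      unfold detR at this ⊢
      nlinarith [this]
    exact hsub hq
  have hco : ¬((ε * (w.2 - u.2)) = 0 ∧ (ε * (u.1 - w.1)) = 0) := by
    rintro ⟨h1, h2⟩
    have e1 : w.2 = u.2 := by
      rcases mul_eq_zero.1 h1 with h | h
      · exact absurd h hε2
      · linarith
    have e2 : w.1 = u.1 := by
      rcases mul_eq_zero.1 h2 with h | h
      · exact absurd h hε2
      · linarith
    exact hunw (Prod.ext e2 e1).symm
  obtain ⟨a, b, ha, hb, hab1, habx⟩ := hx
  have hlx : (ε * (w.2 - u.2)) * x.1 + (ε * (u.1 - w.1)) * x.2 = ε * detR u w := by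
    rw [← habx]
    simp only [Prod.fst_add, Prod.snd_add, Prod.smul_fst, Prod.smul_snd, smul_eq_mul]
    unfold detR
    rw [show b = 1 - a from by linarith]
    ring
  exact ⟨subset_closure hxQ, not_interior_of_hp hco hQsub hlx⟩

lemma detR_cast (x y a b : ℤ) :
    detR ((x:ℝ),(y:ℝ)) ((a:ℝ),(b:ℝ)) = ((x*b - y*a : ℤ) : ℝ) := by
  unfold detR; push_cast; ring

lemma top_bound (p : ℤ) (hp : 1 ≤ p)
    (V : Set (ℝ × ℝ)) (hVfin : V.Finite) (Q : Set (ℝ × ℝ))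
    (hQV : Q = convexHull ℝ V) (h0 : ((0,0) : ℝ × ℝ) ∈ interior Q)
    (hVext : ∀ v ∈ V, v ∈ Set.extremePoints ℝ Q)
    (hV0 : ∀ v ∈ V, v ≠ 0)
    (hcoord : ∀ v ∈ V, ∃ a b : ℤ, v = ((a : ℝ), (b : ℝ)))
    (hbasic : ∀ a b c d : ℤ, IsEdge Q ((a : ℝ), (b : ℝ)) ((c : ℝ), (d : ℝ)) →
      ({((a : ℝ), (b : ℝ)), ((c : ℝ), (d : ℝ))} : Set (ℝ × ℝ)) ≠
        ({(1, -1), ((p : ℝ), 1)} : Set (ℝ × ℝ)) →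
      |a * d - b * c| = 1)
    (hBV : ((p : ℝ), (1:ℝ)) ∈ V) (hCV : ((-1:ℝ), (0:ℝ)) ∈ V)
    (HPint : ∀ x y : ℤ, ((x:ℝ),(y:ℝ)) ∈ V → 2*x - (p-1)*y ≤ p+1)
    (hline : ∀ x y : ℤ, ((x:ℝ),(y:ℝ)) ∈ V → 2*x - (p-1)*y = p+1 →
      (x = 1 ∧ y = -1) ∨ (x = p ∧ y = 1)) :
    ∀ x y : ℤ, ((x:ℝ),(y:ℝ)) ∈ V → ((y ≤ 1 ∧ p*y - x ≤ 1) ∨ ((p+1)*y - x ≤ 1)) := by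
  classical
  have hQconv : Convex ℝ Q := by rw [hQV]; exact convex_convexHull ℝ V
  have hVQ : V ⊆ Q := by rw [hQV]; exact subset_convexHull ℝ V
  -- next(B)
  obtain ⟨w₁, hw₁V, hw₁pos, hw₁min, hw₁hp, hw₁edge⟩ :=
    exists_next 1 (Or.inl rfl) V hVfin Q hQV h0 hVext hV0 _ hBV
  obtain ⟨a₁, b₁, hw₁ab⟩ := hcoord w₁ hw₁V
  subst hw₁ab
  -- integer positivity
  have hd1 : 0 < p * b₁ - a₁ := by
    have h := hw₁pos
    rw [one_mul] at h
    have h2 : detR ((p:ℝ), (1:ℝ)) ((a₁:ℝ), (b₁:ℝ)) = ((p*b₁ - 1*a₁ : ℤ) : ℝ) := by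
      have := detR_cast p 1 a₁ b₁
      push_cast at this ⊢
      convert this using 2 <;> norm_num
    rw [h2] at h
    have : (0:ℤ) < p*b₁ - 1*a₁ := by exact_mod_cast h
    linarith
  -- not the AB edge
  have hAPne : ((a₁:ℝ),(b₁:ℝ)) ≠ ((1:ℝ),(-1:ℝ)) := by
    intro h
    rw [Prod.mk.injEq] at h
    have e1 : a₁ = 1 := by exact_mod_cast h.1
    have e2 : b₁ = -1 := by exact_mod_cast h.2
    rw [e1, e2] at hd1; simp at hd1; linarith
  have hBPne : ((a₁:ℝ),(b₁:ℝ)) ≠ ((p:ℝ),(1:ℝ)) := by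
    intro h
    rw [Prod.mk.injEq] at h
    have e1 : a₁ = p := by exact_mod_cast h.1
    have e2 : b₁ = 1 := by exact_mod_cast h.2
    rw [e1, e2] at hd1; simp at hd1
  have hsetne : ({((p:ℝ),(1:ℝ)), ((a₁:ℝ),(b₁:ℝ))} : Set (ℝ × ℝ)) ≠
      ({(1, -1), ((p : ℝ), 1)} : Set (ℝ × ℝ)) := by
    intro h
    have hmem : ((a₁:ℝ),(b₁:ℝ)) ∈ ({(1, -1), ((p : ℝ), 1)} : Set (ℝ × ℝ)) := by
      rw [← h]; right; rfl
    rcases hmem with h' | h'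
    · exact hAPne h'
    · exact hBPne h'
  have habs := hbasic p 1 a₁ b₁ (by push_cast; exact hw₁edge) (by push_cast; exact hsetne)
  have hdet1 : p * b₁ - a₁ = 1 := by
    rcases abs_eq (by norm_num : (0:ℤ) ≤ 1) |>.1 habs with h | h <;> linarith
  -- b₁ ≥ 0 from minimality vs C
  have hb₁0 : 0 ≤ b₁ := by
    have hpos : 0 < 1 * detR ((p:ℝ),(1:ℝ)) ((-1:ℝ),(0:ℝ)) := by
      unfold detR; norm_num
    have h := hw₁min _ hCV hpos
    rw [one_mul] at h
    have h2 : detR ((a₁:ℝ),(b₁:ℝ)) ((-1:ℝ),(0:ℝ)) = ((b₁ : ℤ) : ℝ) := by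
      unfold detR; push_cast; ring
    rw [h2] at h
    exact_mod_cast h
  -- b₁ ≤ 1
  have hABw₁ := HPint a₁ b₁ hw₁V
  have hb₁1 : b₁ ≤ 1 := by
    by_contra hgt
    push_neg at hgt
    -- b₁ ≥ 2 : (p+1) b₁ ≤ p+3 forces p = 1, b₁ = 2, equality case
    have hkey : (p+1)*b₁ ≤ p+3 := by nlinarith [hABw₁, hdet1]
    have hp1 : p = 1 ∧ b₁ = 2 := by
      constructor
      · nlinarith [hkey]
      · nlinarith [hkey]
    obtain ⟨hp1, hb2⟩ := hp1
    have heq : 2*a₁ - (p-1)*b₁ = p+1 := by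
      rw [hp1] at hdet1 ⊢; rw [hb2] at hdet1 ⊢; omega
    rcases hline a₁ b₁ hw₁V heq with ⟨_, h⟩ | ⟨_, h⟩ <;> omega
  interval_cases b₁
  · -- b₁ = 0 : w₁ = C, direct halfplane
    have ha₁ : a₁ = -1 := by omega
    intro x y hz
    right
    have h := hw₁hp _ hz
    rw [ha₁] at h
    unfold detR at h
    push_cast at h
    have hr : ((((p+1)*y - x : ℤ)) : ℝ) ≤ ((1:ℤ) : ℝ) := by push_cast; linarith
    exact_mod_cast hr
  · -- b₁ = 1 : w₁ = B' = (p-1, 1)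
    have ha₁ : a₁ = p - 1 := by omega
    obtain ⟨w₂, hw₂V, hw₂pos, hw₂min, hw₂hp, hw₂edge⟩ :=
      exists_next 1 (Or.inl rfl) V hVfin Q hQV h0 hVext hV0 _ hw₁V
    obtain ⟨a₂, b₂, hw₂ab⟩ := hcoord w₂ hw₂V
    subst hw₂ab
    have hd2 : 0 < a₁ * b₂ - a₂ := by
      have h := hw₂pos
      rw [one_mul] at h
      unfold detR at h
      push_cast at h
      have hr : ((0:ℤ):ℝ) < ((a₁*b₂ - a₂ : ℤ):ℝ) := by push_cast; linarith
      exact_mod_cast hr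
    have hsetne2 : ({((a₁:ℝ),((1:ℤ):ℝ)), ((a₂:ℝ),(b₂:ℝ))} : Set (ℝ × ℝ)) ≠
        ({(1, -1), ((p : ℝ), 1)} : Set (ℝ × ℝ)) := by
      intro h
      have hmem : ((a₁:ℝ),((1:ℤ):ℝ)) ∈ ({(1, -1), ((p : ℝ), 1)} : Set (ℝ × ℝ)) := by
        rw [← h]; left; rfl
      simp only [Set.mem_insert_iff, Set.mem_singleton_iff, Prod.mk.injEq] at hmem
      rcases hmem with ⟨_, h'⟩ | ⟨h', _⟩
      · norm_num at h'
      · have : a₁ = p := by exact_mod_cast h'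
        omega
    have habs2 := hbasic a₁ 1 a₂ b₂ hw₂edge hsetne2
    have hdet2 : a₁ * b₂ - a₂ = 1 := by
      rcases abs_eq (by norm_num : (0:ℤ) ≤ 1) |>.1 habs2 with h | h <;> linarith
    have hb₂0 : 0 ≤ b₂ := by
      have hpos : 0 < 1 * detR ((a₁:ℝ),((1:ℤ):ℝ)) ((-1:ℝ),(0:ℝ)) := by
        unfold detR; norm_num
      have h := hw₂min _ hCV hpos
      rw [one_mul] at h
      have h2 : detR ((a₂:ℝ),(b₂:ℝ)) ((-1:ℝ),(0:ℝ)) = ((b₂ : ℤ) : ℝ) := by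
        unfold detR; push_cast; ring
      rw [h2] at h
      exact_mod_cast h
    have hb₂1 : b₂ ≤ 1 := by
      have h := hw₁hp _ hw₂V
      rw [one_mul, one_mul, ha₁] at h
      unfold detR at h
      push_cast at h
      have hr : ((b₂ : ℤ) : ℝ) ≤ ((1:ℤ) : ℝ) := by push_cast; nlinarith [h]
      exact_mod_cast hr
    interval_cases b₂
    · -- b₂ = 0 : w₂ = C
      have ha₂ : a₂ = -1 := by omega
      intro x y hz
      left
      constructor
      · have h := hw₁hp _ hz
        rw [one_mul, one_mul, ha₁] at h
        unfold detR at h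
        push_cast at h
        have hr : ((y : ℤ) : ℝ) ≤ ((1:ℤ) : ℝ) := by push_cast; nlinarith [h]
        exact_mod_cast hr
      · have h := hw₂hp _ hz
        rw [one_mul, one_mul, ha₁, ha₂] at h
        unfold detR at h
        push_cast at h
        have hr : (((p*y - x : ℤ)) : ℝ) ≤ ((1:ℤ) : ℝ) := by push_cast; nlinarith [h]
        exact_mod_cast hr
    · -- b₂ = 1 : w₂ = (p-2,1), contradiction via collinearity
      exfalso
      have ha₂ : a₂ = p - 2 := by omega
      have hopen : ((a₁:ℝ),((1:ℤ):ℝ)) ∈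
          openSegment ℝ ((a₂:ℝ),((1:ℤ):ℝ)) ((p:ℝ),(1:ℝ)) := by
        refine ⟨1/2, 1/2, by norm_num, by norm_num, by norm_num, ?_⟩
        apply Prod.ext
        · simp only [Prod.fst_add, Prod.smul_fst, smul_eq_mul]
          rw [ha₁, ha₂]; push_cast; ring
        · simp only [Prod.snd_add, Prod.smul_snd, smul_eq_mul]
          push_cast; ring
      have hext := hVext _ hw₁V
      rw [mem_extremePoints] at hext
      have := (hext.2 _ (hVQ hw₂V) _ (hVQ hBV) hopen).1
      rw [Prod.mk.injEq] at this
      have : a₂ = a₁ := by exact_mod_cast this.1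
      omega

lemma bot_bound (p : ℤ) (hp : 1 ≤ p)
    (V : Set (ℝ × ℝ)) (hVfin : V.Finite) (Q : Set (ℝ × ℝ))
    (hQV : Q = convexHull ℝ V) (h0 : ((0,0) : ℝ × ℝ) ∈ interior Q)
    (hVext : ∀ v ∈ V, v ∈ Set.extremePoints ℝ Q)
    (hV0 : ∀ v ∈ V, v ≠ 0)
    (hcoord : ∀ v ∈ V, ∃ a b : ℤ, v = ((a : ℝ), (b : ℝ)))
    (hbasic : ∀ a b c d : ℤ, IsEdge Q ((a : ℝ), (b : ℝ)) ((c : ℝ), (d : ℝ)) →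
      ({((a : ℝ), (b : ℝ)), ((c : ℝ), (d : ℝ))} : Set (ℝ × ℝ)) ≠
        ({(1, -1), ((p : ℝ), 1)} : Set (ℝ × ℝ)) →
      |a * d - b * c| = 1)
    (hAV : ((1:ℝ), (-1:ℝ)) ∈ V) (hCV : ((-1:ℝ), (0:ℝ)) ∈ V)
    (HPint : ∀ x y : ℤ, ((x:ℝ),(y:ℝ)) ∈ V → 2*x - (p-1)*y ≤ p+1)
    (hline : ∀ x y : ℤ, ((x:ℝ),(y:ℝ)) ∈ V → 2*x - (p-1)*y = p+1 →
      (x = 1 ∧ y = -1) ∨ (x = p ∧ y = 1)) :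
    ∀ x y : ℤ, ((x:ℝ),(y:ℝ)) ∈ V → ((-1 ≤ y ∧ -x - y ≤ 1) ∨ (-x - 2*y ≤ 1)) := by
  classical
  have hQconv : Convex ℝ Q := by rw [hQV]; exact convex_convexHull ℝ V
  have hVQ : V ⊆ Q := by rw [hQV]; exact subset_convexHull ℝ V
  obtain ⟨w₃, hw₃V, hw₃pos, hw₃min, hw₃hp, hw₃edge⟩ :=
    exists_next (-1) (Or.inr rfl) V hVfin Q hQV h0 hVext hV0 _ hAV
  obtain ⟨a₃, b₃, hw₃ab⟩ := hcoord w₃ hw₃V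
  subst hw₃ab
  have hd3 : a₃ + b₃ < 0 := by
    have h := hw₃pos
    unfold detR at h
    push_cast at h
    have hr : ((a₃ + b₃ : ℤ):ℝ) < ((0:ℤ):ℝ) := by push_cast; linarith
    exact_mod_cast hr
  have hsetne : ({((1:ℝ),(-1:ℝ)), ((a₃:ℝ),(b₃:ℝ))} : Set (ℝ × ℝ)) ≠
      ({(1, -1), ((p : ℝ), 1)} : Set (ℝ × ℝ)) := by
    intro h
    have hmem : ((p:ℝ),(1:ℝ)) ∈ ({((1:ℝ),(-1:ℝ)), ((a₃:ℝ),(b₃:ℝ))} : Set (ℝ × ℝ)) := by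
      rw [h]; right; rfl
    simp only [Set.mem_insert_iff, Set.mem_singleton_iff, Prod.mk.injEq] at hmem
    rcases hmem with ⟨_, h'⟩ | ⟨h1, h2⟩
    · norm_num at h'
    · have e1 : a₃ = p := by exact_mod_cast h1.symm
      have e2 : b₃ = 1 := by exact_mod_cast h2.symm
      omega
  have habs := hbasic 1 (-1) a₃ b₃ (by push_cast; exact hw₃edge) (by push_cast; exact hsetne)
  have hdet3 : a₃ + b₃ = -1 := by
    rcases abs_eq (by norm_num : (0:ℤ) ≤ 1) |>.1 habs with h | h <;> omega
  have hb₃0 : b₃ ≤ 0 := by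
    have hpos : 0 < -1 * detR ((1:ℝ),(-1:ℝ)) ((-1:ℝ),(0:ℝ)) := by
      unfold detR; norm_num
    have h := hw₃min _ hCV hpos
    unfold detR at h
    push_cast at h
    have hr : ((b₃:ℤ):ℝ) ≤ ((0:ℤ):ℝ) := by push_cast; linarith
    exact_mod_cast hr
  have hABw₃ := HPint a₃ b₃ hw₃V
  have hb₃1 : -1 ≤ b₃ := by
    by_contra hgt
    push_neg at hgt
    have hkey : -(p+1)*b₃ ≤ p+3 := by nlinarith [hABw₃, hdet3]
    have hp1 : p = 1 ∧ b₃ = -2 := by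
      constructor
      · nlinarith [hkey]
      · nlinarith [hkey]
    obtain ⟨hp1, hb2⟩ := hp1
    have heq : 2*a₃ - (p-1)*b₃ = p+1 := by
      subst hp1; subst hb2; omega
    rcases hline a₃ b₃ hw₃V heq with ⟨_, h⟩ | ⟨_, h⟩ <;> omega
  interval_cases b₃
  · -- b₃ = -1 : w₃ = E = (0,-1)
    have ha₃ : a₃ = 0 := by omega
    obtain ⟨w₄, hw₄V, hw₄pos, hw₄min, hw₄hp, hw₄edge⟩ :=
      exists_next (-1) (Or.inr rfl) V hVfin Q hQV h0 hVext hV0 _ hw₃V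
    obtain ⟨a₄, b₄, hw₄ab⟩ := hcoord w₄ hw₄V
    subst hw₄ab
    have hd4 : a₄ < 0 := by
      have h := hw₄pos
      unfold detR at h
      rw [ha₃] at h
      push_cast at h
      have hr : ((a₄:ℤ):ℝ) < ((0:ℤ):ℝ) := by push_cast; linarith
      exact_mod_cast hr
    have hsetne4 : ({((a₃:ℝ),((-1:ℤ):ℝ)), ((a₄:ℝ),(b₄:ℝ))} : Set (ℝ × ℝ)) ≠
        ({(1, -1), ((p : ℝ), 1)} : Set (ℝ × ℝ)) := by
      intro h
      have hmem : ((a₃:ℝ),((-1:ℤ):ℝ)) ∈ ({(1, -1), ((p : ℝ), 1)} : Set (ℝ × ℝ)) := by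
        rw [← h]; left; rfl
      simp only [Set.mem_insert_iff, Set.mem_singleton_iff, Prod.mk.injEq] at hmem
      rcases hmem with ⟨h', _⟩ | ⟨_, h'⟩
      · have : a₃ = 1 := by exact_mod_cast h'
        omega
      · norm_num at h'
    have habs4 := hbasic a₃ (-1) a₄ b₄ hw₄edge hsetne4
    have hdet4 : a₄ = -1 := by
      rw [ha₃] at habs4
      simp only [zero_mul, zero_sub, abs_neg] at habs4
      have : |a₄| = 1 := by
        rw [show (-1 : ℤ) * a₄ = -a₄ by ring, abs_neg] at habs4
        exact habs4
      rcases abs_eq (by norm_num : (0:ℤ) ≤ 1) |>.1 this with h | h <;> omega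
    have hb₄0 : b₄ ≤ 0 := by
      have hpos : 0 < -1 * detR ((a₃:ℝ),((-1:ℤ):ℝ)) ((-1:ℝ),(0:ℝ)) := by
        unfold detR; rw [ha₃]; push_cast; norm_num
      have h := hw₄min _ hCV hpos
      unfold detR at h
      push_cast at h
      have hr : ((b₄:ℤ):ℝ) ≤ ((0:ℤ):ℝ) := by push_cast; linarith
      exact_mod_cast hr
    have hb₄1 : -1 ≤ b₄ := by
      have h := hw₃hp _ hw₄V
      unfold detR at h
      rw [ha₃] at h
      push_cast at h
      have hr : ((-b₄:ℤ):ℝ) ≤ ((1:ℤ):ℝ) := by push_cast; nlinarith [h]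
      have : -b₄ ≤ (1:ℤ) := by exact_mod_cast hr
      omega
    interval_cases b₄
    · -- b₄ = -1 : w₄ = (-1,-1), kill by collinearity
      exfalso
      have hopen : ((a₃:ℝ),((-1:ℤ):ℝ)) ∈
          openSegment ℝ ((a₄:ℝ),((-1:ℤ):ℝ)) ((1:ℝ),(-1:ℝ)) := by
        refine ⟨1/2, 1/2, by norm_num, by norm_num, by norm_num, ?_⟩
        apply Prod.ext
        · simp only [Prod.fst_add, Prod.smul_fst, smul_eq_mul]
          rw [ha₃, hdet4]; push_cast; ring
        · simp only [Prod.snd_add, Prod.smul_snd, smul_eq_mul]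
          push_cast; ring
      have hext := hVext _ hw₃V
      rw [mem_extremePoints] at hext
      have hr := (hext.2 _ (hVQ hw₄V) _ (hVQ hAV) hopen).1
      rw [Prod.mk.injEq] at hr
      have : a₄ = a₃ := by exact_mod_cast hr.1
      omega
    · -- b₄ = 0 : w₄ = C
      intro x y hz
      left
      constructor
      · have h := hw₃hp _ hz
        unfold detR at h
        rw [ha₃] at h
        push_cast at h
        have hr : ((-1:ℤ):ℝ) ≤ ((y:ℤ):ℝ) := by push_cast; nlinarith [h]
        exact_mod_cast hr
      · have h := hw₄hp _ hz
        unfold detR at h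
        rw [ha₃, hdet4] at h
        push_cast at h
        have hr : ((-x - y:ℤ):ℝ) ≤ ((1:ℤ):ℝ) := by push_cast; nlinarith [h]
        exact_mod_cast hr
  · -- b₃ = 0 : w₃ = C
    have ha₃ : a₃ = -1 := by omega
    intro x y hz
    right
    have h := hw₃hp _ hz
    unfold detR at h
    rw [ha₃] at h
    push_cast at h
    have hr : ((-x - 2*y:ℤ):ℝ) ≤ ((1:ℤ):ℝ) := by push_cast; nlinarith [h]
    exact_mod_cast hr

lemma enum_lemma (p a b : ℤ) (hp : 1 ≤ p) (hgcd : Int.gcd a b = 1)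
    (h1 : 2*a - (p-1)*b ≤ p+1)
    (htop : (b ≤ 1 ∧ p*b - a ≤ 1) ∨ ((p+1)*b - a ≤ 1))
    (hbot : (-1 ≤ b ∧ -a - b ≤ 1) ∨ (-a - 2*b ≤ 1)) :
    (a = 1 ∧ b = -1) ∨ (a = p ∧ b = 1) ∨ (a = p - 1 ∧ b = 1) ∨
    (a = -1 ∧ b = 0) ∨ (a = 0 ∧ b = -1) ∨ (a = 1 ∧ b = 0) := by
  have hb1 : b ≤ 1 := by
    rcases htop with ⟨h, _⟩ | h
    · exact h
    · by_contra hgt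
      push_neg at hgt
      nlinarith [h1, h, mul_nonneg (by linarith : (0:ℤ) ≤ b - 2) (by linarith : (0:ℤ) ≤ p)]
  have hbm1 : -1 ≤ b := by
    rcases hbot with ⟨h, _⟩ | h
    · exact h
    · by_contra hgt
      push_neg at hgt
      nlinarith [h1, h, mul_nonneg (by linarith : (0:ℤ) ≤ -(b + 2)) (by linarith : (0:ℤ) ≤ p - 1)]
  interval_cases b
  · -- b = -1
    simp only [mul_neg_one] at h1 htop hbot
    omega
  · -- b = 0
    have ha : a = 1 ∨ a = -1 := by
      have h := hgcd
      rw [Int.gcd_zero_right] at h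
      rcases Int.natAbs_eq a with h' | h' <;> omega
    simp only [mul_zero] at h1 htop hbot
    omega
  · -- b = 1
    simp only [mul_one] at h1 htop hbot
    omega

/-- if Q is an LDP-polygon with an edge from (1,−1) to (p,1), with (−1,0) a
vertex, and all other edges unimodular, then
{(1,−1),(p,1),(−1,0)} ⊆ V(Q) ⊆ {(1,−1),(p,1),(p−1,1),(−1,0),(0,−1)}; consequently Q is one
of Q_p^[1], Q_p^[2], Q̌_p^[2], Q_p^[3]. -/
theorem stmt5 (p : ℤ) (hp : 1 ≤ p) (Q : Set (ℝ × ℝ)) (hQ : IsLDPpolygon Q)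
    (hedge : IsEdge Q (1, -1) ((p : ℝ), 1))
    (hvert : ((-1, 0) : ℝ × ℝ) ∈ Set.extremePoints ℝ Q)
    (hbasic : ∀ a b c d : ℤ, IsEdge Q ((a : ℝ), (b : ℝ)) ((c : ℝ), (d : ℝ)) →
      ({((a : ℝ), (b : ℝ)), ((c : ℝ), (d : ℝ))} : Set (ℝ × ℝ)) ≠
        ({(1, -1), ((p : ℝ), 1)} : Set (ℝ × ℝ)) →
      |a * d - b * c| = 1) :
    ({(1, -1), ((p : ℝ), 1), (-1, 0)} : Set (ℝ × ℝ)) ⊆ Set.extremePoints ℝ Q ∧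
    Set.extremePoints ℝ Q ⊆
      ({(1, -1), ((p : ℝ), 1), ((p : ℝ) - 1, 1), (-1, 0), (0, -1)} : Set (ℝ × ℝ)) ∧
    (Q = Qpoly1 p ∨ Q = Qpoly2 p ∨ Q = QpolyCheck2 p ∨ Q = Qpoly3 p) := by
  classical
  obtain ⟨⟨F, hQF⟩, h0, hprim⟩ := hQ
  have hconv : Convex ℝ Q := by rw [hQF]; exact convex_convexHull ℝ _
  have hcomp : IsCompact Q := by rw [hQF]; exact F.finite_toSet.isCompact_convexHull ℝ
  set V := Set.extremePoints ℝ Q with hVdef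
  have hVF : V ⊆ (F : Set (ℝ × ℝ)) := by
    rw [hVdef, hQF]; exact extremePoints_convexHull_subset
  have hVfin : V.Finite := F.finite_toSet.subset hVF
  have hQV : Q = convexHull ℝ V := by
    apply Set.Subset.antisymm
    · conv_lhs => rw [← closure_convexHull_extremePoints hcomp hconv]
      rw [IsClosed.closure_eq ((hVfin.isCompact_convexHull ℝ).isClosed)]
    · exact convexHull_min extremePoints_subset hconv
  have hV0 : ∀ v ∈ V, v ≠ 0 := by
    intro v hv hv0
    obtain ⟨a, b, hab, hgcd⟩ := hprim v hv
    rw [hv0] at hab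
    have h1 : ((a:ℝ)) = 0 := by
      have := congrArg Prod.fst hab; simpa using this.symm
    have h2 : ((b:ℝ)) = 0 := by
      have := congrArg Prod.snd hab; simpa using this.symm
    have e1 : a = 0 := by exact_mod_cast h1
    have e2 : b = 0 := by exact_mod_cast h2
    rw [e1, e2] at hgcd
    simp at hgcd
  have hcoord : ∀ v ∈ V, ∃ a b : ℤ, v = ((a : ℝ), (b : ℝ)) := by
    intro v hv; obtain ⟨a, b, hab, _⟩ := hprim v hv; exact ⟨a, b, hab⟩
  have hVext : ∀ v ∈ V, v ∈ Set.extremePoints ℝ Q := fun v hv => hv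
  have hAV : ((1:ℝ), (-1:ℝ)) ∈ V := hedge.2.1
  have hBV : ((p:ℝ), (1:ℝ)) ∈ V := hedge.2.2.1
  have hCV : ((-1:ℝ), (0:ℝ)) ∈ V := hvert
  have hVQ : V ⊆ Q := by rw [hQV]; exact subset_convexHull ℝ V
  have hAQ : ((1:ℝ), (-1:ℝ)) ∈ Q := hVQ hAV
  have hBQ : ((p:ℝ), (1:ℝ)) ∈ Q := hVQ hBV
  have hCQ : ((-1:ℝ), (0:ℝ)) ∈ Q := hVQ hCV
  have hpR : (1:ℝ) ≤ (p:ℝ) := by exact_mod_cast hp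
  -- halfplane of edge AB
  have hDAB : 0 < detR ((1:ℝ),(-1:ℝ)) ((p:ℝ),(1:ℝ)) := by
    unfold detR; simp; linarith
  have HP_AB : ∀ q ∈ Q, detR q (((p:ℝ),(1:ℝ)) - ((1:ℝ),(-1:ℝ))) ≤
      detR ((1:ℝ),(-1:ℝ)) ((p:ℝ),(1:ℝ)) :=
    hp_of_edge hconv h0 hAQ hBQ hedge.2.2.2 hDAB
  have HPint : ∀ x y : ℤ, ((x:ℝ),(y:ℝ)) ∈ V → 2*x - (p-1)*y ≤ p+1 := by
    intro x y hxy
    have h := HP_AB _ (hVQ hxy)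
    unfold detR at h
    simp only [Prod.fst_sub, Prod.snd_sub] at h
    have hr : ((2*x - (p-1)*y : ℤ):ℝ) ≤ ((p+1 : ℤ):ℝ) := by push_cast; linarith
    exact_mod_cast hr
  -- points of V on the AB line are A or B
  have hlineR : ∀ z ∈ V, detR z (((p:ℝ),(1:ℝ)) - ((1:ℝ),(-1:ℝ))) =
      detR ((1:ℝ),(-1:ℝ)) ((p:ℝ),(1:ℝ)) →
      z = ((1:ℝ),(-1:ℝ)) ∨ z = ((p:ℝ),(1:ℝ)) := by
    intro z hz heq
    unfold detR at heq
    simp only [Prod.fst_sub, Prod.snd_sub] at heq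
    set t := (z.2 + 1) / 2 with htdef
    have hz2 : z.2 = 2*t - 1 := by rw [htdef]; ring
    have hz1 : z.1 = 1 + t * ((p:ℝ) - 1) := by
      rw [htdef]; field_simp; linarith
    have hzrep : z = (1 - t) • ((1:ℝ),(-1:ℝ)) + t • ((p:ℝ),(1:ℝ)) := by
      apply Prod.ext
      · simp only [Prod.fst_add, Prod.smul_fst, smul_eq_mul]
        rw [hz1]; ring
      · simp only [Prod.snd_add, Prod.smul_snd, smul_eq_mul]
        rw [hz2]; ring
    rcases lt_trichotomy t 0 with ht | ht | ht
    · -- t < 0 : A ∈ openSegment z B forces z = A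
      left
      have h1t : (1:ℝ) - t ≠ 0 := by linarith
      have hrep : (1/(1-t)) • z + (-t/(1-t)) • ((p:ℝ),(1:ℝ)) = ((1:ℝ),(-1:ℝ)) := by
        apply Prod.ext
        · simp only [Prod.fst_add, Prod.smul_fst, smul_eq_mul]
          rw [div_mul_eq_mul_div, div_mul_eq_mul_div, ← add_div, div_eq_iff h1t]
          rw [hz1]; ring
        · simp only [Prod.snd_add, Prod.smul_snd, smul_eq_mul]
          rw [div_mul_eq_mul_div, div_mul_eq_mul_div, ← add_div, div_eq_iff h1t]
          rw [hz2]; ring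
      have hopen : ((1:ℝ),(-1:ℝ)) ∈ openSegment ℝ z ((p:ℝ),(1:ℝ)) :=
        ⟨1/(1-t), -t/(1-t), div_pos one_pos (by linarith), div_pos (by linarith) (by linarith),
          by rw [← add_div, show (1:ℝ) + -t = 1 - t by ring]; exact div_self h1t, hrep⟩
      have hext := hedge.2.1
      rw [mem_extremePoints] at hext
      exact (hext.2 z (hVQ hz) _ hBQ hopen).1
    · -- t = 0 : z = A
      left
      rw [hzrep, ht]; simp
    · rcases lt_trichotomy t 1 with ht1 | ht1 | ht1
      · -- 0 < t < 1 : z ∈ openSegment A B, so z = A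
        left
        have hopen : z ∈ openSegment ℝ ((1:ℝ),(-1:ℝ)) ((p:ℝ),(1:ℝ)) :=
          ⟨1 - t, t, by linarith, ht, by ring, hzrep.symm⟩
        have hext := hz
        rw [mem_extremePoints] at hext
        exact (hext.2 _ hAQ _ hBQ hopen).1.symm
      · -- t = 1 : z = B
        right
        rw [hzrep, ht1]; simp
      · -- t > 1 : B ∈ openSegment A z forces z = B
        right
        have htne : t ≠ 0 := by linarith
        have hrep : (1 - 1/t) • ((1:ℝ),(-1:ℝ)) + (1/t) • z = ((p:ℝ),(1:ℝ)) := by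
          apply Prod.ext
          · simp only [Prod.fst_add, Prod.smul_fst, smul_eq_mul]
            rw [hz1]; field_simp; ring
          · simp only [Prod.snd_add, Prod.smul_snd, smul_eq_mul]
            rw [hz2]; field_simp; ring
        have hb0 : (0:ℝ) < 1 - 1/t := by
          rw [sub_pos, div_lt_one (by linarith)]; linarith
        have hopen : ((p:ℝ),(1:ℝ)) ∈ openSegment ℝ ((1:ℝ),(-1:ℝ)) z :=
          ⟨1 - 1/t, 1/t, hb0, by positivity, by ring, hrep⟩
        have hext := hedge.2.2.1
        rw [mem_extremePoints] at hext
        exact (hext.2 _ hAQ z (hVQ hz) hopen).2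
  have hlineInt : ∀ x y : ℤ, ((x:ℝ),(y:ℝ)) ∈ V → 2*x - (p-1)*y = p+1 →
      (x = 1 ∧ y = -1) ∨ (x = p ∧ y = 1) := by
    intro x y hxy heq
    have heqR : detR ((x:ℝ),(y:ℝ)) (((p:ℝ),(1:ℝ)) - ((1:ℝ),(-1:ℝ))) =
        detR ((1:ℝ),(-1:ℝ)) ((p:ℝ),(1:ℝ)) := by
      unfold detR
      simp only [Prod.fst_sub, Prod.snd_sub]
      have : ((2*x - (p-1)*y : ℤ):ℝ) = ((p+1:ℤ):ℝ) := by exact_mod_cast heq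
      push_cast at this
      push_cast
      linarith
    rcases hlineR _ hxy heqR with h | h <;> rw [Prod.mk.injEq] at h
    · left
      exact ⟨by exact_mod_cast h.1, by exact_mod_cast h.2⟩
    · right
      exact ⟨by exact_mod_cast h.1, by exact_mod_cast h.2⟩
  -- top and bottom chain bounds
  have htop := top_bound p hp V hVfin Q hQV h0 hVext hV0 hcoord hbasic hBV hCV HPint hlineInt
  have hbot := bot_bound p hp V hVfin Q hQV h0 hVext hV0 hcoord hbasic hAV hCV HPint hlineInt
  -- (1,0) is not a vertex
  have hK1 : ((1:ℝ),(0:ℝ)) ∉ V := by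
    intro hz
    set s : ℝ := 2 / ((p:ℝ) + 1) with hsdef
    have hs0 : 0 < s := by positivity
    have hs1 : s ≤ 1 := by
      rw [hsdef, div_le_one (by linarith)]; linarith
    have hx₂Q : ((1:ℝ), s) ∈ Q := by
      have hrep : (1 - s) • ((-1:ℝ),(0:ℝ)) + s • ((p:ℝ),(1:ℝ)) = ((1:ℝ), s) := by
        apply Prod.ext
        · simp only [Prod.fst_add, Prod.smul_fst, smul_eq_mul]
          rw [hsdef]; field_simp; ring
        · simp only [Prod.snd_add, Prod.smul_snd, smul_eq_mul]
          ring
      rw [← hrep]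
      exact hconv hCQ hBQ (by linarith) (le_of_lt hs0) (by ring)
    set t : ℝ := 1 / (1 + s) with htdef
    have ht0 : 0 < t := by positivity
    have ht1 : t < 1 := by
      rw [htdef, div_lt_one (by linarith)]; linarith
    have hrep2 : (1 - t) • ((1:ℝ),(-1:ℝ)) + t • ((1:ℝ), s) = ((1:ℝ),(0:ℝ)) := by
      apply Prod.ext
      · simp only [Prod.fst_add, Prod.smul_fst, smul_eq_mul]; ring
      · simp only [Prod.snd_add, Prod.smul_snd, smul_eq_mul]
        rw [htdef]; field_simp; ring
    have hopen : ((1:ℝ),(0:ℝ)) ∈ openSegment ℝ ((1:ℝ),(-1:ℝ)) ((1:ℝ), s) :=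
      ⟨1 - t, t, by linarith, ht0, by ring, hrep2⟩
    have hext := hz
    rw [mem_extremePoints] at hext
    have := (hext.2 _ hAQ _ hx₂Q hopen).1
    rw [Prod.mk.injEq] at this
    norm_num at this
  -- the vertex set is contained in the five candidates
  have hsub5 : V ⊆ ({(1, -1), ((p : ℝ), 1), ((p : ℝ) - 1, 1), (-1, 0), (0, -1)} :
      Set (ℝ × ℝ)) := by
    intro z hz
    obtain ⟨a, b, hab, hgcd⟩ := hprim z hz
    subst hab
    have h1 := HPint a b hz
    have h2 := htop a b hz
    have h3 := hbot a b hz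
    rcases enum_lemma p a b hp hgcd h1 h2 h3 with
      ⟨e1, e2⟩ | ⟨e1, e2⟩ | ⟨e1, e2⟩ | ⟨e1, e2⟩ | ⟨e1, e2⟩ | ⟨e1, e2⟩
    · left; rw [e1, e2]; norm_num
    · right; left; rw [e1, e2]; norm_num
    · right; right; left; rw [e1, e2]; push_cast; norm_num
    · right; right; right; left; rw [e1, e2]; norm_num
    · right; right; right; right; rw [e1, e2]; norm_num
    · exfalso
      rw [e1, e2] at hz
      apply hK1
      have : (((1:ℤ):ℝ), ((0:ℤ):ℝ)) = ((1:ℝ),(0:ℝ)) := by norm_num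
      rwa [this] at hz
  refine ⟨?_, hsub5, ?_⟩
  · intro z hz
    rcases hz with h | h | h
    · rw [h]; exact hedge.2.1
    · rw [h]; exact hedge.2.2.1
    · rw [Set.mem_singleton_iff] at h; rw [h]; exact hvert
  · -- Q is one of the four polygons
    by_cases hB'V : ((p:ℝ) - 1, (1:ℝ)) ∈ V <;> by_cases hEV : ((0:ℝ), (-1:ℝ)) ∈ V
    · -- both: Qpoly3
      right; right; right
      have hVeq : V = ({(1, -1), ((p : ℝ), 1), ((p : ℝ) - 1, 1), (-1, 0), (0, -1)} :
          Set (ℝ × ℝ)) := by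
        apply Set.Subset.antisymm hsub5
        intro z hz
        rcases hz with h | h | h | h | h
        · rw [h]; exact hAV
        · rw [h]; exact hBV
        · rw [h]; exact hB'V
        · rw [h]; exact hCV
        · rw [Set.mem_singleton_iff] at h; rw [h]; exact hEV
      rw [hQV, hVeq, Qpoly3]
    · -- B' only : Qpoly2
      right; left
      have hVeq : V = ({(1, -1), ((p : ℝ), 1), ((p : ℝ) - 1, 1), (-1, 0)} :
          Set (ℝ × ℝ)) := by
        apply Set.Subset.antisymm
        · intro z hz
          rcases hsub5 hz with h | h | h | h | h
          · left; exact h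
          · right; left; exact h
          · right; right; left; exact h
          · right; right; right; exact h
          · rw [Set.mem_singleton_iff] at h; rw [h] at hz; exact absurd hz hEV
        · intro z hz
          rcases hz with h | h | h | h
          · rw [h]; exact hAV
          · rw [h]; exact hBV
          · rw [h]; exact hB'V
          · rw [Set.mem_singleton_iff] at h; rw [h]; exact hCV
      rw [hQV, hVeq, Qpoly2]
    · -- E only : QpolyCheck2
      right; right; left
      have hVeq : V = ({(1, -1), ((p : ℝ), 1), (-1, 0), (0, -1)} : Set (ℝ × ℝ)) := by
        apply Set.Subset.antisymm
        · intro z hz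
          rcases hsub5 hz with h | h | h | h | h
          · left; exact h
          · right; left; exact h
          · rw [h] at hz; exact absurd hz hB'V
          · right; right; left; exact h
          · rw [Set.mem_singleton_iff] at h; right; right; right; exact h
        · intro z hz
          rcases hz with h | h | h | h
          · rw [h]; exact hAV
          · rw [h]; exact hBV
          · rw [h]; exact hCV
          · rw [Set.mem_singleton_iff] at h; rw [h]; exact hEV
      rw [hQV, hVeq, QpolyCheck2]
    · -- neither : Qpoly1
      left
      have hVeq : V = ({(1, -1), ((p : ℝ), 1), (-1, 0)} : Set (ℝ × ℝ)) := by
        apply Set.Subset.antisymm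
        · intro z hz
          rcases hsub5 hz with h | h | h | h | h
          · left; exact h
          · right; left; exact h
          · rw [h] at hz; exact absurd hz hB'V
          · right; right; exact h
          · rw [Set.mem_singleton_iff] at h; rw [h] at hz; exact absurd hz hEV
        · intro z hz
          rcases hz with h | h | h
          · rw [h]; exact hAV
          · rw [h]; exact hBV
          · rw [Set.mem_singleton_iff] at h; rw [h]; exact hCV
      rw [hQV, hVeq, Qpoly1]
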